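/- (Clean accuracy of the non-robust multi-class network) Let d, k ≥ 1 with d ≥ 2 and 2(k+1) · ln d < √d, and let μ : Fin k → ℝ^d be orthogonal equinorm cluster features with binary cluster labels s. Consider the multi-class network F̃ with components f_j(x) = ReLU(⟨μ_j + Σ_{l : s l = s j} μ_l, x⟩). Then with probability at least 1 − 2k · d^{−(ln d)/2} over (J, ξ) ~ (uniform on Fin k) ⊗ γ_d, the input x = μ_J + ξ is classified correctly, i.e., f_J(x) > f_j(x) for every j ≠ J. -/

import Mathlib

open MeasureTheory ProbabilityTheory Real Finset
open scoped RealInnerProductSpace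

/-- The standard Gaussian measure on `ℝ^d`. -/
noncomputable def stdGaussian (d : ℕ) : Measure (EuclideanSpace ℝ (Fin d)) :=
  (Measure.pi fun _ : Fin d => gaussianReal 0 1).map (MeasurableEquiv.toLp 2 (Fin d → ℝ))

/-- The ReLU activation. -/
noncomputable def relu (z : ℝ) : ℝ := max z 0

/-- The `j`-th component of the non-robust multi-class network. -/
noncomputable def fMulti {d k : ℕ} (μ : Fin k → EuclideanSpace ℝ (Fin d)) (s : Fin k → ℝ)
    (j : Fin k) (x : EuclideanSpace ℝ (Fin d)) : ℝ :=
  relu ⟪μ j + ∑ l ∈ univ.filter (fun l => s l = s j), μ l, x⟫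


open scoped ENNReal NNReal

lemma gauss_mgf (a : ℝ) :
    ∫⁻ x, ENNReal.ofReal (rexp (a * x)) ∂(gaussianReal 0 1) = ENNReal.ofReal (rexp (a ^ 2 / 2)) := by
  rw [gaussianReal_of_var_ne_zero 0 one_ne_zero,
    lintegral_withDensity_eq_lintegral_mul _ (measurable_gaussianPDF 0 1)
      (by fun_prop)]
  have h : ∀ x : ℝ, (gaussianPDF 0 1 x * ENNReal.ofReal (rexp (a * x)))
      = ENNReal.ofReal (rexp (a ^ 2 / 2)) * gaussianPDF a 1 x := by
    intro x
    rw [gaussianPDF, gaussianPDF, ← ENNReal.ofReal_mul (gaussianPDFReal_nonneg _ _ _),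
      ← ENNReal.ofReal_mul (exp_nonneg _)]
    congr 1
    simp only [gaussianPDFReal, NNReal.coe_one, mul_one]
    rw [mul_assoc, ← Real.exp_add, mul_comm (rexp _), mul_assoc, ← Real.exp_add]
    congr 2
    ring
  simp only [Pi.mul_apply, h]
  rw [lintegral_const_mul _ (measurable_gaussianPDF a 1),
    lintegral_gaussianPDF_eq_one a one_ne_zero, mul_one]

lemma lintegral_pi_fin {n : ℕ} (m : Fin n → Measure ℝ) [∀ i, IsProbabilityMeasure (m i)]
    (f : Fin n → ℝ → ℝ≥0∞) (hf : ∀ i, Measurable (f i)) :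
    ∫⁻ x : Fin n → ℝ, ∏ i, f i (x i) ∂Measure.pi m = ∏ i, ∫⁻ x, f i x ∂m i := by
  induction n with
  | zero => simp
  | succ n ih =>
    have hmp := (measurePreserving_piFinSuccAbove m 0).symm
    have hg : Measurable fun x : Fin (n+1) → ℝ => ∏ i, f i (x i) :=
      Finset.measurable_prod _ fun i _ => (hf i).comp (measurable_pi_apply i)
    rw [← hmp.lintegral_comp hg]
    simp_rw [MeasurableEquiv.piFinSuccAbove_symm_apply, Fin.insertNthEquiv,
      Equiv.coe_fn_mk, Fin.insertNth_zero, Fin.prod_univ_succ, Fin.cons_zero, Fin.cons_succ,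
      Fin.zero_succAbove, cast_eq]
    have hprod := lintegral_prod_mul (μ := m 0) (ν := Measure.pi fun j => m j.succ)
      (f := f 0) (g := fun y : Fin n → ℝ => ∏ x : Fin n, f x.succ (y x))
      (hf 0).aemeasurable
      (Finset.measurable_prod _ fun i _ => (hf i.succ).comp (measurable_pi_apply i)).aemeasurable
    exact hprod.trans (by rw [ih (fun j => m j.succ) (fun i => f i.succ) (fun i => hf i.succ)])

lemma stdGaussian_exp_lintegral (d : ℕ) (w : EuclideanSpace ℝ (Fin d)) (t : ℝ) :
    ∫⁻ ξ, ENNReal.ofReal (rexp (t * ⟪w, ξ⟫)) ∂(stdGaussian d)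
      = ENNReal.ofReal (rexp (t ^ 2 * ‖w‖ ^ 2 / 2)) := by
  have hinner : ∀ ξ : EuclideanSpace ℝ (Fin d), ⟪w, ξ⟫ = ∑ i, w i * ξ i := by
    intro ξ
    simp [PiLp.inner_apply, RCLike.inner_apply, mul_comm]
  have hnorm : ‖w‖ ^ 2 = ∑ i, (w i) ^ 2 := by
    rw [← real_inner_self_eq_norm_sq, hinner]
    simp [sq]
  have hexp : ∀ ξ : EuclideanSpace ℝ (Fin d),
      ENNReal.ofReal (rexp (t * ⟪w, ξ⟫)) = ∏ i, ENNReal.ofReal (rexp (t * w i * ξ i)) := by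
    intro ξ
    rw [← ENNReal.ofReal_prod_of_nonneg (fun i _ => exp_nonneg _), ← Real.exp_sum, hinner,
      Finset.mul_sum]
    simp_rw [mul_assoc]
  simp_rw [hexp]
  have hP := lintegral_pi_fin (fun _ : Fin d => gaussianReal 0 1)
    (fun i x => ENNReal.ofReal (rexp (t * w i * x))) (fun i => by fun_prop)
  rw [show ∫⁻ ξ, (∏ i, ENNReal.ofReal (rexp (t * w i * ξ i))) ∂(stdGaussian d)
      = ∫⁻ x : Fin d → ℝ, ∏ i, ENNReal.ofReal (rexp (t * w i * x i))
          ∂Measure.pi (fun _ : Fin d => gaussianReal 0 1) from by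
          rw [_root_.stdGaussian, lintegral_map_equiv]; rfl, hP]
  simp_rw [gauss_mgf]
  rw [← ENNReal.ofReal_prod_of_nonneg (fun i _ => exp_nonneg _), ← Real.exp_sum]
  congr 1
  rw [hnorm, Finset.mul_sum, ← Finset.sum_div]
  simp [mul_pow]

lemma stdGaussian_tail (d : ℕ) (w : EuclideanSpace ℝ (Fin d)) (c t : ℝ) (ht : 0 ≤ t) :
    stdGaussian d {ξ | c ≤ ⟪w, ξ⟫} ≤ ENNReal.ofReal (rexp (t ^ 2 * ‖w‖ ^ 2 / 2 - t * c)) := by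
  have hmeas : AEMeasurable (fun ξ : EuclideanSpace ℝ (Fin d) => ENNReal.ofReal (rexp (t * ⟪w, ξ⟫)))
      (stdGaussian d) := by
    refine (ENNReal.measurable_ofReal.comp (Real.measurable_exp.comp ?_)).aemeasurable
    exact (measurable_const.mul ((continuous_const.inner continuous_id).measurable))
  have key := mul_meas_ge_le_lintegral₀ hmeas (ENNReal.ofReal (rexp (t * c)))
  rw [stdGaussian_exp_lintegral] at key
  have hsub : {ξ : EuclideanSpace ℝ (Fin d) | c ≤ ⟪w, ξ⟫}
      ⊆ {ξ | ENNReal.ofReal (rexp (t * c)) ≤ ENNReal.ofReal (rexp (t * ⟪w, ξ⟫))} := by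
    intro ξ hξ
    exact ENNReal.ofReal_le_ofReal (exp_le_exp.2 (mul_le_mul_of_nonneg_left hξ ht))
  refine le_trans (measure_mono hsub) ?_
  have hε : ENNReal.ofReal (rexp (t * c)) ≠ 0 := by
    simp [ENNReal.ofReal_eq_zero, not_le, exp_pos]
  rw [mul_comm] at key
  rw [← ENNReal.le_div_iff_mul_le (Or.inl hε) (Or.inl ENNReal.ofReal_ne_top)] at key
  refine key.trans ?_
  rw [ENNReal.div_eq_inv_mul, ← ENNReal.ofReal_inv_of_pos (exp_pos _), ← Real.exp_neg,
    ← ENNReal.ofReal_mul (exp_nonneg _), ← Real.exp_add]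
  apply ENNReal.ofReal_le_ofReal
  apply le_of_eq
  congr 1
  ring

instance (d : ℕ) : IsProbabilityMeasure (stdGaussian d) :=
  Measure.isProbabilityMeasure_map (MeasurableEquiv.toLp 2 (Fin d → ℝ)).measurable.aemeasurable

theorem multiclass_clean_accuracy (d k : ℕ) (hd : 2 ≤ d) (hk : 1 ≤ k)
    (hlog : 2 * (k + 1) * Real.log d < Real.sqrt d)
    (μ : Fin k → EuclideanSpace ℝ (Fin d))
    (hnorm : ∀ j, ‖μ j‖ = Real.sqrt d)
    (horth : ∀ i j, i ≠ j → ⟪μ i, μ j⟫ = 0)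
    (s : Fin k → ℝ) (hs : ∀ j, s j = 1 ∨ s j = -1) :
    ENNReal.ofReal (1 - 2 * k * (d : ℝ) ^ (-(Real.log d) / 2)) ≤
      (((k : ENNReal)⁻¹ • (Measure.count : Measure (Fin k))).prod (stdGaussian d))
        {p : Fin k × EuclideanSpace ℝ (Fin d) |
          ∀ j : Fin k, j ≠ p.1 → fMulti μ s j (μ p.1 + p.2) < fMulti μ s p.1 (μ p.1 + p.2)} := by
  classical
  set D : ℝ := (d : ℝ) with hD
  have hD2 : (2:ℝ) ≤ D := by rw [hD]; exact_mod_cast hd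
  have hD0 : (0:ℝ) < D := by linarith
  have hD1 : (1:ℝ) < D := by linarith
  have hlogD : 0 < Real.log D := Real.log_pos hD1
  have hsqrt : 0 < Real.sqrt D := Real.sqrt_pos.2 hD0
  have hk1 : (1:ℝ) ≤ (k:ℝ) := by exact_mod_cast hk
  set w : Fin k → EuclideanSpace ℝ (Fin d) :=
    fun j => μ j + ∑ l ∈ univ.filter (fun l => s l = s j), μ l with hw
  set τ : ℝ := ((k:ℝ)+1) * Real.sqrt D * Real.log D with hτdef
  have hτlt : τ < D / 2 := by
    have h := mul_lt_mul_of_pos_right hlog hsqrt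
    nlinarith [Real.mul_self_sqrt hD0.le]
  -- norm bound
  have hwnorm : ∀ j, ‖w j‖ ≤ ((k:ℝ)+1) * Real.sqrt D := by
    intro j
    refine (norm_add_le _ _).trans ?_
    have h1 : ‖∑ l ∈ univ.filter (fun l => s l = s j), μ l‖ ≤ (k:ℝ) * Real.sqrt D := by
      refine (norm_sum_le _ _).trans ?_
      rw [Finset.sum_congr rfl (fun l _ => hnorm l), Finset.sum_const, nsmul_eq_mul]
      have hc : ((univ.filter (fun l => s l = s j)).card : ℝ) ≤ (k:ℝ) := by
        have := Finset.card_filter_le univ (fun l => s l = s j)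
        exact_mod_cast this.trans_eq (by simp)
      exact mul_le_mul_of_nonneg_right hc (Real.sqrt_nonneg _)
    rw [hnorm j]
    linarith
  -- inner products
  have hself : ∀ i : Fin k, ⟪μ i, μ i⟫ = D := by
    intro i
    rw [real_inner_self_eq_norm_sq, hnorm i, Real.sq_sqrt hD0.le]
  have hwin : ∀ j J : Fin k, ⟪w j, μ J⟫ =
      (if j = J then D else 0) + (if J ∈ univ.filter (fun l => s l = s j) then D else 0) := by
    intro j J
    rw [show w j = μ j + ∑ l ∈ univ.filter (fun l => s l = s j), μ l from rfl,
      inner_add_left, sum_inner]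
    congr 1
    · by_cases h : j = J
      · subst h; rw [if_pos rfl, hself]
      · simp [h, horth j J h]
    · by_cases h : J ∈ univ.filter (fun l => s l = s j)
      · rw [Finset.sum_eq_single_of_mem J h (fun l _ hl => horth l J hl), hself, if_pos h]
      · rw [Finset.sum_eq_zero (fun l hl => horth l J (fun e => h (e ▸ hl))), if_neg h]
  have hwJ : ∀ J, ⟪w J, μ J⟫ = 2 * D := by
    intro J
    rw [hwin J J, if_pos rfl, if_pos (by simp)]
    ring
  have hwj : ∀ j J, j ≠ J → ⟪w j, μ J⟫ ≤ D := by
    intro j J hne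
    rw [hwin j J, if_neg hne]
    split <;> simp [hD0.le]
  -- the good event
  set E : Set (EuclideanSpace ℝ (Fin d)) := {ξ | ∀ j, |⟪w j, ξ⟫| < τ} with hE
  have hinner_meas : ∀ v : EuclideanSpace ℝ (Fin d),
      Measurable fun ξ : EuclideanSpace ℝ (Fin d) => ⟪v, ξ⟫ := fun v =>
    (continuous_const.inner continuous_id).measurable
  have hEmeas : MeasurableSet E := by
    rw [show E = ⋂ j, {ξ | |⟪w j, ξ⟫| < τ} from by ext ξ; simp [hE]]
    exact MeasurableSet.iInter fun j => measurableSet_lt (hinner_meas (w j)).abs measurable_const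
  -- classification on the good event
  have hincl : (Set.univ ×ˢ E) ⊆ {p : Fin k × EuclideanSpace ℝ (Fin d) |
      ∀ j : Fin k, j ≠ p.1 → fMulti μ s j (μ p.1 + p.2) < fMulti μ s p.1 (μ p.1 + p.2)} := by
    rintro ⟨J, ξ⟩ ⟨-, hξ⟩ j hj
    have habs1 : -τ < ⟪w J, ξ⟫ := (abs_lt.1 (hξ J)).1
    have habs2 : ⟪w j, ξ⟫ < τ := (abs_lt.1 (hξ j)).2
    show max ⟪w j, μ J + ξ⟫ 0 < max ⟪w J, μ J + ξ⟫ 0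
    have h1 : ⟪w J, μ J + ξ⟫ = 2 * D + ⟪w J, ξ⟫ := by rw [inner_add_right, hwJ J]
    have h2 : ⟪w j, μ J + ξ⟫ ≤ D + ⟪w j, ξ⟫ := by
      rw [inner_add_right]; exact add_le_add_left (hwj j J hj) _
    have hgt : (3/2) * D < ⟪w J, μ J + ξ⟫ := by rw [h1]; linarith
    have hmax : max ⟪w J, μ J + ξ⟫ 0 = ⟪w J, μ J + ξ⟫ := max_eq_left (by linarith)
    rw [hmax]
    exact lt_of_lt_of_le (max_lt (by linarith) (by linarith)) hgt.le
  -- tail bounds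
  set β : ℝ≥0∞ := ENNReal.ofReal (rexp (-(Real.log D)^2/2)) with hβ
  set t₀ : ℝ := Real.log D / (((k:ℝ)+1) * Real.sqrt D) with ht₀def
  have hb0 : ((k:ℝ)+1) * Real.sqrt D ≠ 0 := by positivity
  have ht₀ : 0 ≤ t₀ := div_nonneg hlogD.le (by positivity)
  have htail : ∀ v : EuclideanSpace ℝ (Fin d), ‖v‖ ≤ ((k:ℝ)+1) * Real.sqrt D →
      stdGaussian d {ξ | τ ≤ ⟪v, ξ⟫} ≤ β := by
    intro v hv
    refine (stdGaussian_tail d v τ t₀ ht₀).trans ?_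
    refine ENNReal.ofReal_le_ofReal (Real.exp_le_exp.2 ?_)
    have hb : t₀ * (((k:ℝ)+1) * Real.sqrt D) = Real.log D := div_mul_cancel₀ _ hb0
    have h1 : t₀^2 * ‖v‖^2 ≤ (Real.log D)^2 := by
      have hvb : ‖v‖^2 ≤ (((k:ℝ)+1) * Real.sqrt D)^2 := pow_le_pow_left₀ (norm_nonneg v) hv 2
      calc t₀^2 * ‖v‖^2 ≤ t₀^2 * (((k:ℝ)+1) * Real.sqrt D)^2 :=
            mul_le_mul_of_nonneg_left hvb (sq_nonneg _)
        _ = (t₀ * (((k:ℝ)+1) * Real.sqrt D))^2 := by ring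
        _ = (Real.log D)^2 := by rw [hb]
    have h2 : t₀ * τ = (Real.log D)^2 := by
      rw [hτdef, ht₀def]
      field_simp
    linarith
  -- union bound
  have hcompl : stdGaussian d Eᶜ ≤ (2 * (k:ℝ≥0∞)) * β := by
    have hsubc : Eᶜ ⊆ ⋃ j, ({ξ : EuclideanSpace ℝ (Fin d) | τ ≤ ⟪w j, ξ⟫}
        ∪ {ξ | τ ≤ ⟪-(w j), ξ⟫}) := by
      intro ξ hξ
      simp only [hE, Set.mem_compl_iff, Set.mem_setOf_eq, not_forall, not_lt] at hξ
      obtain ⟨j, hj⟩ := hξ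
      rcases le_abs.1 hj with h | h
      · exact Set.mem_iUnion.2 ⟨j, Or.inl h⟩
      · refine Set.mem_iUnion.2 ⟨j, Or.inr ?_⟩
        simpa [inner_neg_left] using h
    refine (measure_mono hsubc).trans ((measure_iUnion_le _).trans ?_)
    have hbound : ∀ j, stdGaussian d ({ξ : EuclideanSpace ℝ (Fin d) | τ ≤ ⟪w j, ξ⟫}
        ∪ {ξ | τ ≤ ⟪-(w j), ξ⟫}) ≤ 2 * β := by
      intro j
      refine (measure_union_le _ _).trans ?_
      have h2 := htail (-(w j)) (by rw [norm_neg]; exact hwnorm j)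
      calc _ ≤ β + β := add_le_add (htail (w j) (hwnorm j)) h2
        _ = 2 * β := (two_mul β).symm
    rw [tsum_fintype]
    refine (Finset.sum_le_sum fun j _ => hbound j).trans ?_
    rw [Finset.sum_const, Finset.card_univ, Fintype.card_fin, nsmul_eq_mul]
    exact le_of_eq (by ring)
  -- measure of the product set
  have hcount : ((k : ℝ≥0∞)⁻¹ • (Measure.count : Measure (Fin k))) Set.univ = 1 := by
    rw [Measure.smul_apply, smul_eq_mul, ← Finset.coe_univ, Measure.count_apply_finset,
      Finset.card_univ, Fintype.card_fin]
    exact ENNReal.inv_mul_cancel (Nat.cast_ne_zero.mpr (by omega))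
      (ENNReal.natCast_ne_top k)
  have hprodE : (((k : ℝ≥0∞)⁻¹ • (Measure.count : Measure (Fin k))).prod (stdGaussian d))
      (Set.univ ×ˢ E) = stdGaussian d E := by
    rw [Measure.prod_prod, hcount, one_mul]
  refine le_trans ?_ (measure_mono hincl)
  rw [hprodE]
  have hEc : stdGaussian d E = 1 - stdGaussian d Eᶜ := by
    have h := measure_compl (μ := stdGaussian d) hEmeas.compl (measure_ne_top _ _)
    rw [compl_compl, measure_univ] at h
    exact h
  have hxval : 2 * (k:ℝ) * D ^ (-(Real.log D) / 2) = 2 * (k:ℝ) * rexp (-(Real.log D)^2/2) := by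
    rw [Real.rpow_def_of_pos hD0]
    congr 2
    ring
  have h2kβ : (2 * (k:ℝ≥0∞)) * β ≤ ENNReal.ofReal (2 * (k:ℝ) * D ^ (-(Real.log D) / 2)) := by
    rw [hxval, hβ, ENNReal.ofReal_mul (by positivity)]
    refine le_of_eq ?_
    congr 1
    rw [show (2:ℝ) * (k:ℝ) = ((2*k : ℕ):ℝ) from by push_cast; ring, ENNReal.ofReal_natCast]
    push_cast
    ring
  rw [hEc, ENNReal.ofReal_sub _ (by positivity), ENNReal.ofReal_one]
  exact tsub_le_tsub_left (hcompl.trans h2kβ) 1
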